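/- Let c > 1, 1 < μ < c, ν > 0, and let g_{μ,ν} be the inner product on 𝔤_c whose matrix in the basis e₀, e₁, e₂ is [[1, 1, 0], [1, μ, 0], [0, 0, ν]], with Ricci form Ric. Then the only endomorphism of 𝔤_c that is skew-symmetric with respect to both g_{μ,ν} and Ric is 0. (Hence for 1 < μ < c the full isometry group of (G_c, g_{μ,ν}) is G_c itself.) -/

import Mathlib

noncomputable section

open scoped BigOperators

/-- The underlying space of the 3-dimensional Lie algebras under consideration. -/
abbrev V3 : Type := Fin 3 → ℝ

/-- The standard basis `e₀, e₁, e₂`. -/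
def e3 (i : Fin 3) : V3 := Pi.single i 1

/-- The bracket of the Lie algebra `𝔤_c`:
`[e₀,e₁] = 0`, `[e₂,e₀] = e₁`, `[e₂,e₁] = −c e₀ + 2 e₁`, extended bilinearly. -/
def braC (c : ℝ) (x y : V3) : V3 :=
  ![-c * (x 2 * y 1 - y 2 * x 1),
    (x 2 * y 0 - y 2 * x 0) + 2 * (x 2 * y 1 - y 2 * x 1),
    0]

/-- The inner product on `𝔤_c`, `c > 1`, with matrix `[[1,1,0],[1,μ,0],[0,0,ν]]`
in the basis `e₀,e₁,e₂`. -/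
def gT (μ ν : ℝ) (x y : V3) : ℝ :=
  x 0 * y 0 + (x 0 * y 1 + x 1 * y 0) + μ * (x 1 * y 1) + ν * (x 2 * y 2)

/-- The curvature tensor `R(X,Y)Z = ∇_X ∇_Y Z − ∇_Y ∇_X Z − ∇_{[X,Y]} Z`. -/
def Rc (br nab : V3 → V3 → V3) (X Y Z : V3) : V3 :=
  nab X (nab Y Z) - nab Y (nab X Z) - nab (br X Y) Z

/-- The Ricci form `Ric(X,Y) = tr (Z ↦ R(Z,X)Y)`. -/
def RicF (br nab : V3 → V3 → V3) (X Y : V3) : ℝ :=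
  ∑ k : Fin 3, Rc br nab (e3 k) X Y k

def nabF (c μ ν : ℝ) (x y : V3) : V3 :=
  ![((2 - μ - c)/2*(x 0*y 2 + x 2*y 0) + (2*μ - μ^2 - 2*c + c*μ)/2*(x 1*y 2)
      + (2*μ - μ^2 - c*μ)/2*(x 2*y 1)) / (μ-1),
    ((c - μ)/2*(x 0*y 2) + (2 + c - 3*μ)/2*(x 1*y 2)
      + (μ + c - 2)/2*(x 2*y 0 + x 2*y 1)) / (μ-1),
    ((x 0*y 0) + (2 + μ - c)/2*(x 0*y 1 + x 1*y 0) + (2*μ - c)*(x 1*y 1)) / ν]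

lemma e3_0 : e3 0 = ![1,0,0] := by funext i; fin_cases i <;> simp [e3] <;> rfl
lemma e3_1 : e3 1 = ![0,1,0] := by funext i; fin_cases i <;> simp [e3] <;> rfl
lemma e3_2 : e3 2 = ![0,0,1] := by funext i; fin_cases i <;> simp [e3] <;> rfl

lemma nabF_koszul (c μ ν : ℝ) (hμ : μ ≠ 1) (hν : ν ≠ 0) (X Y Z : V3) :
    2 * gT μ ν (nabF c μ ν X Y) Z =
      gT μ ν (braC c X Y) Z - gT μ ν (braC c Y Z) X + gT μ ν (braC c Z X) Y := by
  have h1 : μ - 1 ≠ 0 := sub_ne_zero.mpr hμ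
  simp only [nabF, gT, braC, Matrix.cons_val_zero, Matrix.cons_val_one, Matrix.head_cons,
    Matrix.cons_val_two, Matrix.tail_cons]
  field_simp
  ring

lemma gT_nondeg (μ ν : ℝ) (hμ : μ ≠ 1) (hν : ν ≠ 0) (w w' : V3)
    (h : ∀ Z : V3, gT μ ν w Z = gT μ ν w' Z) : w = w' := by
  have h0 := h (e3 0); have h1 := h (e3 1); have h2 := h (e3 2)
  simp only [gT, e3_0, e3_1, e3_2, Matrix.cons_val_zero, Matrix.cons_val_one, Matrix.head_cons,
    Matrix.cons_val_two, Matrix.tail_cons] at h0 h1 h2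
  have hw2 : w 2 = w' 2 := by
    have h2' : ν * w 2 = ν * w' 2 := by linarith
    have := mul_left_cancel₀ hν h2'; linarith
  have hw1 : w 1 = w' 1 := by
    have hd : (μ - 1) * (w 1 - w' 1) = 0 := by nlinarith [h0, h1]
    rcases mul_eq_zero.mp hd with h | h
    · exact absurd h (sub_ne_zero.mpr hμ)
    · linarith
  have hw0 : w 0 = w' 0 := by nlinarith [h0]
  funext i; fin_cases i <;> assumption

set_option maxHeartbeats 2000000 in
lemma ric_formula (c μ ν : ℝ) (hμ : μ ≠ 1) (hν : ν ≠ 0) (X Y : V3) :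
    (∑ k : Fin 3, (nabF c μ ν (e3 k) (nabF c μ ν X Y) - nabF c μ ν X (nabF c μ ν (e3 k) Y)
      - nabF c μ ν (braC c (e3 k) X) Y) k) =
    ((2 - μ - μ^2/2 - c + c^2/2) * (X 0 * Y 0)
      + (2 - 3*μ^2/2 - 2*c + c*μ + c^2/2) * (X 0 * Y 1 + X 1 * Y 0)
      + (6*μ - 6*μ^2 + μ^3/2 - 4*c + 3*c*μ + c^2 - c^2*μ/2) * (X 1 * Y 1)) / ((μ-1)*ν)
      + (2 - 2*μ - μ^2/2 + c*μ - c^2/2) * (X 2 * Y 2) / (μ-1) := by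
  have h1 : μ - 1 ≠ 0 := sub_ne_zero.mpr hμ
  simp only [Fin.sum_univ_three, e3_0, e3_1, e3_2, nabF, braC, Pi.sub_apply,
    Matrix.cons_val_zero, Matrix.cons_val_one, Matrix.head_cons,
    Matrix.cons_val_two, Matrix.tail_cons]
  field_simp
  ring
set_option maxHeartbeats 1600000 in
lemma solve_system (c μ ν a0 a1 a2 b0 b1 b2 d0 d1 d2 : ℝ)
    (hc : 1 < c) (hμ1 : 1 < μ) (hμc : μ < c) (hν : 0 < ν)
    (G1 : a0 + a1 = 0) (G2 : b0 + μ*b1 = 0) (G3 : ν*d2 = 0)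
    (G4 : a0 + μ*a1 + b0 + b1 = 0) (G5 : ν*a2 + d0 + d1 = 0) (G6 : ν*b2 + d0 + μ*d1 = 0)
    (F00 : (2 - μ - μ^2/2 - c + c^2/2)*a0 + (2 - 3*μ^2/2 - 2*c + c*μ + c^2/2)*a1 = 0)
    (F02 : (2 - 2*μ - μ^2/2 + c*μ - c^2/2)*(ν*a2)
            + (2 - μ - μ^2/2 - c + c^2/2)*d0 + (2 - 3*μ^2/2 - 2*c + c*μ + c^2/2)*d1 = 0)
    (F12 : (2 - 2*μ - μ^2/2 + c*μ - c^2/2)*(ν*b2)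
            + (2 - 3*μ^2/2 - 2*c + c*μ + c^2/2)*d0
            + (6*μ - 6*μ^2 + μ^3/2 - 4*c + 3*c*μ + c^2 - c^2*μ/2)*d1 = 0) :
    a0 = 0 ∧ a1 = 0 ∧ a2 = 0 ∧ b0 = 0 ∧ b1 = 0 ∧ b2 = 0 ∧ d0 = 0 ∧ d1 = 0 ∧ d2 = 0 := by
  have hμ0 : μ - 1 ≠ 0 := ne_of_gt (by linarith : (0:ℝ) < μ - 1)
  have hcμ : c - μ ≠ 0 := ne_of_gt (by linarith : (0:ℝ) < c - μ)
  have hν0 : ν ≠ 0 := ne_of_gt hν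
  have hc0 : c ≠ 0 := ne_of_gt (by linarith : (0:ℝ) < c)
  -- a1 = b1
  have hab : a1 = b1 := by
    have h : (μ-1)*(a1 - b1) = 0 := by linear_combination G4 - G1 - G2
    have := (mul_eq_zero.mp h).resolve_left hμ0; linarith
  -- a1 = 0
  have ha1 : a1 = 0 := by
    have h : ((μ-1)*(c-μ))*a1 = 0 := by
      linear_combination F00 - (2 - μ - μ^2/2 - c + c^2/2)*G1
    have := (mul_eq_zero.mp h).resolve_left (mul_ne_zero hμ0 hcμ); linarith
  have ha0 : a0 = 0 := by linarith
  have hb1 : b1 = 0 := by linarith [hab]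
  have hb0 : b0 = 0 := by linear_combination G2 - μ*hb1
  -- the 2x2 system for d0 d1
  have h3 : ((2 - μ - μ^2/2 - c + c^2/2) - (2 - 2*μ - μ^2/2 + c*μ - c^2/2))*d0
      + ((2 - 3*μ^2/2 - 2*c + c*μ + c^2/2) - (2 - 2*μ - μ^2/2 + c*μ - c^2/2))*d1 = 0 := by
    linear_combination F02 - (2 - 2*μ - μ^2/2 + c*μ - c^2/2)*G5
  have h4 : ((2 - 3*μ^2/2 - 2*c + c*μ + c^2/2) - (2 - 2*μ - μ^2/2 + c*μ - c^2/2))*d0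
      + ((6*μ - 6*μ^2 + μ^3/2 - 4*c + 3*c*μ + c^2 - c^2*μ/2) - μ*(2 - 2*μ - μ^2/2 + c*μ - c^2/2))*d1 = 0 := by
    linear_combination F12 - (2 - 2*μ - μ^2/2 + c*μ - c^2/2)*G6
  have hD : c*(μ-1)^2*(c-μ)^2 ≠ 0 :=
    mul_ne_zero (mul_ne_zero hc0 (pow_ne_zero 2 hμ0)) (pow_ne_zero 2 hcμ)
  have hd0 : d0 = 0 := by
    have h : (c*(μ-1)^2*(c-μ)^2)*d0 = 0 := by
      linear_combination (-((6*μ - 6*μ^2 + μ^3/2 - 4*c + 3*c*μ + c^2 - c^2*μ/2) - μ*(2 - 2*μ - μ^2/2 + c*μ - c^2/2)))*h3 + ((2 - 3*μ^2/2 - 2*c + c*μ + c^2/2) - (2 - 2*μ - μ^2/2 + c*μ - c^2/2))*h4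
    have := (mul_eq_zero.mp h).resolve_left hD; linarith
  have hd1 : d1 = 0 := by
    have h : (c*(μ-1)^2*(c-μ)^2)*d1 = 0 := by
      linear_combination (((2 - 3*μ^2/2 - 2*c + c*μ + c^2/2) - (2 - 2*μ - μ^2/2 + c*μ - c^2/2)))*h3 - ((2 - μ - μ^2/2 - c + c^2/2) - (2 - 2*μ - μ^2/2 + c*μ - c^2/2))*h4
    have := (mul_eq_zero.mp h).resolve_left hD; linarith
  have ha2 : a2 = 0 := by
    have h : ν*a2 = 0 := by linear_combination G5 - hd0 - hd1
    have := (mul_eq_zero.mp h).resolve_left hν0; linarith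
  have hb2 : b2 = 0 := by
    have h : ν*b2 = 0 := by linear_combination G6 - hd0 - μ*hd1
    have := (mul_eq_zero.mp h).resolve_left hν0; linarith
  have hd2 : d2 = 0 := by
    have := (mul_eq_zero.mp G3).resolve_left hν0; linarith
  exact ⟨ha0, ha1, ha2, hb0, hb1, hb2, hd0, hd1, hd2⟩

/-- for `c > 1` and `1 < μ < c`, the only endomorphism of `𝔤_c`
skew-symmetric with respect to both `g_{μ,ν}` and its Ricci form is `0`. -/
theorem stmt12 (c μ ν : ℝ) (hc : 1 < c) (hμ1 : 1 < μ) (hμc : μ < c) (hν : 0 < ν)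
    (nab : V3 → V3 → V3)
    (hK : ∀ X Y Z : V3, 2 * gT μ ν (nab X Y) Z =
      gT μ ν (braC c X Y) Z - gT μ ν (braC c Y Z) X + gT μ ν (braC c Z X) Y) :
    ∀ A : Module.End ℝ V3,
      (∀ x y : V3, gT μ ν (A x) y + gT μ ν x (A y) = 0) →
      (∀ x y : V3, RicF (braC c) nab (A x) y + RicF (braC c) nab x (A y) = 0) →
      A = 0 := by
  have hμ : μ ≠ 1 := ne_of_gt hμ1
  have hν0 : ν ≠ 0 := ne_of_gt hν
  have hnab : nab = nabF c μ ν := by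
    funext X Y
    refine gT_nondeg μ ν hμ hν0 _ _ (fun Z => ?_)
    have h1 := hK X Y Z
    have h2 := nabF_koszul c μ ν hμ hν0 X Y Z
    linarith
  have hRicEq : ∀ X Y : V3, RicF (braC c) nab X Y =
      ((2 - μ - μ^2/2 - c + c^2/2) * (X 0 * Y 0)
      + (2 - 3*μ^2/2 - 2*c + c*μ + c^2/2) * (X 0 * Y 1 + X 1 * Y 0)
      + (6*μ - 6*μ^2 + μ^3/2 - 4*c + 3*c*μ + c^2 - c^2*μ/2) * (X 1 * Y 1)) / ((μ-1)*ν)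
      + (2 - 2*μ - μ^2/2 + c*μ - c^2/2) * (X 2 * Y 2) / (μ-1) := by
    intro X Y
    rw [show RicF (braC c) nab X Y =
        ∑ k : Fin 3, (nab (e3 k) (nab X Y) - nab X (nab (e3 k) Y)
          - nab (braC c (e3 k) X) Y) k from rfl, hnab]
    exact ric_formula c μ ν hμ hν0 X Y
  intro A hg hR
  -- g-skew equations
  have hg00 := hg (e3 0) (e3 0); have hg01 := hg (e3 0) (e3 1); have hg02 := hg (e3 0) (e3 2)
  have hg11 := hg (e3 1) (e3 1); have hg12 := hg (e3 1) (e3 2); have hg22 := hg (e3 2) (e3 2)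
  simp only [gT, e3_0, e3_1, e3_2, Matrix.cons_val_zero, Matrix.cons_val_one, Matrix.head_cons,
    Matrix.cons_val_two, Matrix.tail_cons] at hg00 hg01 hg02 hg11 hg12 hg22
  have hR00 := hR (e3 0) (e3 0); have hR02 := hR (e3 0) (e3 2); have hR12 := hR (e3 1) (e3 2)
  rw [hRicEq, hRicEq] at hR00 hR02 hR12
  simp only [e3_0, e3_1, e3_2, Matrix.cons_val_zero, Matrix.cons_val_one, Matrix.head_cons,
    Matrix.cons_val_two, Matrix.tail_cons] at hR00 hR02 hR12
  have hμ0 : μ - 1 ≠ 0 := ne_of_gt (by linarith : (0:ℝ) < μ - 1)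
  field_simp at hR00 hR02 hR12
  have hne2 : (2:ℝ)*(μ-1) ≠ 0 := mul_ne_zero two_ne_zero hμ0
  have G1 : A ![1,0,0] 0 + A ![1,0,0] 1 = 0 := by linear_combination hg00 / 2
  have G2 : A ![0,1,0] 0 + μ * A ![0,1,0] 1 = 0 := by linear_combination hg11 / 2
  have G3 : ν * A ![0,0,1] 2 = 0 := by linear_combination hg22 / 2
  have G4 : A ![1,0,0] 0 + μ * A ![1,0,0] 1 + A ![0,1,0] 0 + A ![0,1,0] 1 = 0 := by
    linear_combination hg01
  have G5 : ν * A ![1,0,0] 2 + A ![0,0,1] 0 + A ![0,0,1] 1 = 0 := by linear_combination hg02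
  have G6 : ν * A ![0,1,0] 2 + A ![0,0,1] 0 + μ * A ![0,0,1] 1 = 0 := by linear_combination hg12
  have F00 : (2 - μ - μ^2/2 - c + c^2/2) * A ![1,0,0] 0
      + (2 - 3*μ^2/2 - 2*c + c*μ + c^2/2) * A ![1,0,0] 1 = 0 := by linear_combination hR00 / 4
  have F02 : (2 - 2*μ - μ^2/2 + c*μ - c^2/2)*(ν * A ![1,0,0] 2)
      + (2 - μ - μ^2/2 - c + c^2/2) * A ![0,0,1] 0
      + (2 - 3*μ^2/2 - 2*c + c*μ + c^2/2) * A ![0,0,1] 1 = 0 := by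
    have h : (2*(μ-1)) * ((2 - 2*μ - μ^2/2 + c*μ - c^2/2)*(ν * A ![1,0,0] 2)
      + (2 - μ - μ^2/2 - c + c^2/2) * A ![0,0,1] 0
      + (2 - 3*μ^2/2 - 2*c + c*μ + c^2/2) * A ![0,0,1] 1) = 0 := by linear_combination (μ-1) * hR02
    exact (mul_eq_zero.mp h).resolve_left hne2
  have F12 : (2 - 2*μ - μ^2/2 + c*μ - c^2/2)*(ν * A ![0,1,0] 2)
      + (2 - 3*μ^2/2 - 2*c + c*μ + c^2/2) * A ![0,0,1] 0
      + (6*μ - 6*μ^2 + μ^3/2 - 4*c + 3*c*μ + c^2 - c^2*μ/2) * A ![0,0,1] 1 = 0 := by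
    have h : (2*(μ-1)) * ((2 - 2*μ - μ^2/2 + c*μ - c^2/2)*(ν * A ![0,1,0] 2)
      + (2 - 3*μ^2/2 - 2*c + c*μ + c^2/2) * A ![0,0,1] 0
      + (6*μ - 6*μ^2 + μ^3/2 - 4*c + 3*c*μ + c^2 - c^2*μ/2) * A ![0,0,1] 1) = 0 := by
      linear_combination (μ-1) * hR12
    exact (mul_eq_zero.mp h).resolve_left hne2
  obtain ⟨ha0, ha1, ha2, hb0, hb1, hb2, hd0, hd1, hd2⟩ :=
    solve_system c μ ν _ _ _ _ _ _ _ _ _ hc hμ1 hμc hν G1 G2 G3 G4 G5 G6 F00 F02 F12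
  have hA0 : A (e3 0) = 0 := by
    rw [e3_0]; funext i; fin_cases i
    · simpa using ha0
    · simpa using ha1
    · simpa using ha2
  have hA1 : A (e3 1) = 0 := by
    rw [e3_1]; funext i; fin_cases i
    · simpa using hb0
    · simpa using hb1
    · simpa using hb2
  have hA2 : A (e3 2) = 0 := by
    rw [e3_2]; funext i; fin_cases i
    · simpa using hd0
    · simpa using hd1
    · simpa using hd2
  refine LinearMap.ext fun x => ?_
  have hx : x = x 0 • e3 0 + x 1 • e3 1 + x 2 • e3 2 := by
    funext i; fin_cases i <;>
      simp [e3_0, e3_1, e3_2]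
  rw [show (0 : Module.End ℝ V3) x = 0 from rfl, hx, map_add, map_add, map_smul, map_smul,
    map_smul, hA0, hA1, hA2]
  simp
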